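/- Suppose (I, ≤) is a preorder, θ is antitone (j ≤ i implies θ(i) ≤ θ(j), with canonical homomorphisms q(i,j) : M/θ(i) → M/θ(j) for j ≤ i), I carries the Alexandroff lower-set topology, and F carries the topology generated by the sets [a](U) for a ∈ M and U open. Then the set of continuous sections of f : F → I is in bijection with the set of compatible families {(m_i)_{i ∈ I} ∈ ∏_{i∈I} M/θ(i) : q(i,j)(m_i) = m_j for all j ≤ i}, the bijection sending a continuous section s to the family of second components of the s(i). -/

import Mathlib

open Topology

/-- The Alexandroff lower-set topology on a preorder: open sets are the lower sets. -/
def lowerTop (I : Type*) [Preorder I] : TopologicalSpace I where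
  IsOpen U := IsLowerSet U
  isOpen_univ := isLowerSet_univ
  isOpen_inter := fun _ _ h₁ h₂ => h₁.inter h₂
  isOpen_sUnion := fun _ hS => isLowerSet_sUnion hS

/-- The topology on `F = Σ i, M/θ i` generated by the subbasis of sets
`[m](U) = {(i, ⟦m⟧ᵢ) : i ∈ U}` for `m ∈ M` and `U` open in `τ`. -/
def etaleTop {M I : Type*} [Monoid M] (θ : I → Con M) (τ : TopologicalSpace I) :
    TopologicalSpace ((i : I) × (θ i).Quotient) :=
  TopologicalSpace.generateFrom
    {V | ∃ (m : M) (U : Set I), τ.IsOpen U ∧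
      V = (fun i => (⟨i, (↑m : (θ i).Quotient)⟩ : (i : I) × (θ i).Quotient)) '' U}

/-- Let `M` be a monoid, `(I, ≤)` a preorder, `θ` an antitone family of
congruences on `M` with canonical homomorphisms `q i j : M/θ i → M/θ j` for `j ≤ i`
(characterized by `q i j ⟦a⟧ᵢ = ⟦a⟧ⱼ`). With the Alexandroff lower-set topology on `I`
and the generated topology on `F = Σ i, M/θ i`, the set of continuous sections of
`Sigma.fst : F → I` (encoded as dependent families `s : ∀ i, (θ i).Quotient` with
`i ↦ (i, s i)` continuous) is in bijection with the set of compatible families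
`{(mᵢ)ᵢ : q i j mᵢ = mⱼ for all j ≤ i}`, the bijection sending a continuous section to
its family of (second) components. -/
theorem stmt5 {M I : Type*} [Monoid M] [Preorder I] (θ : I → Con M)
    (hθ : ∀ i j : I, j ≤ i → θ i ≤ θ j)
    (q : ∀ i j, j ≤ i → (θ i).Quotient →* (θ j).Quotient)
    (hq : ∀ i j (h : j ≤ i) (a : M), q i j h (↑a) = (↑a : (θ j).Quotient)) :
    ∃ e : {s : ∀ i : I, (θ i).Quotient //
            Continuous[lowerTop I, etaleTop θ (lowerTop I)]
              fun i => (⟨i, s i⟩ : (i : I) × (θ i).Quotient)} ≃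
          {w : ∀ i : I, (θ i).Quotient // ∀ i j (h : j ≤ i), q i j h (w i) = w j},
      ∀ s, (e s).1 = s.1 := by
  have key : ∀ s : ∀ i : I, (θ i).Quotient,
      (Continuous[lowerTop I, etaleTop θ (lowerTop I)]
        fun i => (⟨i, s i⟩ : (i : I) × (θ i).Quotient)) ↔
      (∀ i j (h : j ≤ i), q i j h (s i) = s j) := by
    intro s
    have hpre : ∀ (m : M) (U : Set I),
        ((fun i => (⟨i, s i⟩ : (i : I) × (θ i).Quotient)) ⁻¹'
          ((fun i => (⟨i, (↑m : (θ i).Quotient)⟩ : (i : I) × (θ i).Quotient)) '' U))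
        = {k | k ∈ U ∧ s k = (↑m : (θ k).Quotient)} := by
      intro m U
      ext k
      simp only [Set.mem_preimage, Set.mem_image, Set.mem_setOf_eq]
      constructor
      · rintro ⟨x, hx, hxe⟩
        obtain ⟨h1, h2⟩ := Sigma.mk.inj_iff.mp hxe
        subst h1
        exact ⟨hx, (eq_of_heq h2).symm⟩
      · rintro ⟨hk, he⟩
        exact ⟨k, hk, by rw [he]⟩
    constructor
    · intro hc i j hji
      obtain ⟨m, hm⟩ := Con.mk'_surjective (s i)
      have hlow : IsLowerSet {k | k ∈ (Set.univ : Set I) ∧ s k = (↑m : (θ k).Quotient)} := by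
        have hVopen : (etaleTop θ (lowerTop I)).IsOpen
            ((fun i => (⟨i, (↑m : (θ i).Quotient)⟩ : (i : I) × (θ i).Quotient)) '' Set.univ) :=
          TopologicalSpace.GenerateOpen.basic _ ⟨m, Set.univ, (lowerTop I).isOpen_univ, rfl⟩
        have ho := @Continuous.isOpen_preimage _ _ (lowerTop I) (etaleTop θ (lowerTop I))
          _ hc _ hVopen
        rw [hpre] at ho
        exact ho
      have hsi : s i = (↑m : (θ i).Quotient) := hm.symm
      have hsj : s j = (↑m : (θ j).Quotient) := (hlow hji ⟨trivial, hsi⟩).2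
      rw [hsi, hsj, hq]
    · intro hcomp
      unfold etaleTop
      rw [continuous_generateFrom_iff]
      rintro V ⟨m, U, hU, rfl⟩
      rw [hpre]
      show IsLowerSet {k | k ∈ U ∧ s k = (↑m : (θ k).Quotient)}
      intro i j hji ⟨hiU, hie⟩
      refine ⟨hU hji hiU, ?_⟩
      rw [← hcomp i j hji, hie, hq]
  exact ⟨Equiv.subtypeEquivRight key, fun s => rfl⟩
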